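/- Let R be a commutative ring and P a projective R-module. Then for every R-module N the natural map P ⊗_R N → Hom_R(P*, N), sending p ⊗ n to the map (w ↦ w(p)·n), is injective. (Projective modules are universally torsionless.) -/
import Mathlib

open TensorProduct

/-- The natural map `M ⊗ N → Hom(M*, N)`, `m ⊗ n ↦ (w ↦ w m • n)`. -/
noncomputable def natMap (R : Type*) [CommRing R] (M : Type*) [AddCommGroup M] [Module R M]
    (N : Type*) [AddCommGroup N] [Module R N] :
    M ⊗[R] N →ₗ[R] ((M →ₗ[R] R) →ₗ[R] N) :=
  (dualTensorHom R (Module.Dual R M) N).comp (LinearMap.rTensor N (Module.Dual.eval R M))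

lemma natMap_tmul (R : Type*) [CommRing R] (M : Type*) [AddCommGroup M] [Module R M]
    (N : Type*) [AddCommGroup N] [Module R N] (m : M) (n : N) (w : M →ₗ[R] R) :
    natMap R M N (m ⊗ₜ n) w = w m • n := by
  simp [natMap]

lemma natMap_naturality (R : Type*) [CommRing R] (M : Type*) [AddCommGroup M] [Module R M]
    (M' : Type*) [AddCommGroup M'] [Module R M']
    (N : Type*) [AddCommGroup N] [Module R N] (f : M →ₗ[R] M') (x : M ⊗[R] N)
    (w : M' →ₗ[R] R) :
    natMap R M' N (f.rTensor N x) w = natMap R M N x (w.comp f) := by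
  induction x using TensorProduct.induction_on with
  | zero => simp
  | tmul m n => simp [natMap_tmul]
  | add a b ha hb => simp [map_add, ha, hb]

lemma natMap_free_ker (R : Type*) [CommRing R] (ι : Type*) [DecidableEq ι]
    (N : Type*) [AddCommGroup N] [Module R N] (y : (ι →₀ R) ⊗[R] N)
    (hy : natMap R (ι →₀ R) N y = 0) : y = 0 := by
  have key : ∀ i, (TensorProduct.finsuppScalarLeft R N ι y) i
      = natMap R (ι →₀ R) N y (Finsupp.lapply i) := by
    intro i
    clear hy
    induction y using TensorProduct.induction_on with
    | zero => simp
    | tmul f n => simp [natMap_tmul]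
    | add a b ha hb => simp [map_add, ha, hb]
  have : TensorProduct.finsuppScalarLeft R N ι y = 0 := by
    ext i
    simp [key i, hy]
  simpa using (TensorProduct.finsuppScalarLeft R N ι).injective (by simpa using this)

theorem stmt3 (R : Type u) [CommRing R] (P : Type v) [AddCommGroup P] [Module R P]
    [Module.Projective R P]
    (N : Type w) [AddCommGroup N] [Module R N] :
    Function.Injective (natMap R P N) := by
  classical
  obtain ⟨s, hs⟩ := Module.projective_def'.mp (inferInstance : Module.Projective R P)
  rw [← LinearMap.ker_eq_bot, LinearMap.ker_eq_bot']
  intro x hx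
  have h0 : natMap R (P →₀ R) N (s.rTensor N x) = 0 := by
    ext w
    rw [natMap_naturality]
    simp [hx]
  have := natMap_free_ker R P N (s.rTensor N x) h0
  have h2 : (Finsupp.linearCombination R (id : P → P)).rTensor N (s.rTensor N x) = x := by
    rw [← LinearMap.rTensor_comp_apply, hs]
    simp
  rw [this] at h2
  simpa using h2.symm
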